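/- Let (X, 𝔐) be a measurable space, let P and P' be probability measures on X, let n, n' ≥ 1 be natural numbers, let α ∈ [0,1], let M ≥ 0, and let g : X → ℝ be measurable with 0 ≤ g(x) ≤ M for all x. On the product probability space Ω = (Fin n → X) × (Fin n' → X) equipped with the measure μ = (⊗_{i<n} P) ⊗ (⊗_{j<n'} P') (so that the n coordinates of the first component are i.i.d. with law P, the n' coordinates of the second component are i.i.d. with law P', and all are jointly independent), define the random variable T(ω) = (1/n)·Σ_{i<n} ( g(ω₁(i)) − (α/2)·g(ω₁(i))² ) − ((1−α)/(2n'))·Σ_{j<n'} g(ω₂(j))². Then the variance of T satisfies Var_μ[T] ≤ M²/n + α²·M⁴/(4n) + (1−α)²·M⁴/(4n'). -/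

import Mathlib

open MeasureTheory ProbabilityTheory Set Function

section helpers

lemma my_variance_comp {Ω Ω' : Type*} [MeasurableSpace Ω] [MeasurableSpace Ω']
    (μ : Measure Ω) (e : Ω → Ω') (he : Measurable e)
    (f : Ω' → ℝ) (hf : Measurable f) :
    variance (fun ω => f (e ω)) μ = variance f (μ.map e) := by
  have h1 : (μ.map e)[f] = μ[fun ω => f (e ω)] :=
    integral_map he.aemeasurable hf.aestronglyMeasurable
  rw [variance, variance, evariance, evariance, h1,
    lintegral_map (by measurability) he]

lemma my_pi_map_eval {ι : Type*} [Fintype ι] {Y : ι → Type*} [∀ i, MeasurableSpace (Y i)]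
    (μ : ∀ i, Measure (Y i)) [∀ i, IsProbabilityMeasure (μ i)] (i : ι) :
    (Measure.pi μ).map (Function.eval i) = μ i := by
  classical
  ext s hs
  rw [Measure.map_apply (measurable_pi_apply i) hs, Set.eval_preimage, Measure.pi_pi]
  rw [Finset.prod_eq_single i]
  · simp
  · intro j _ hj; simp [Function.update_of_ne hj]
  · simp

lemma my_iIndepFun_eval {ι : Type*} [Fintype ι] {Y : ι → Type*} [∀ i, MeasurableSpace (Y i)]
    (μ : ∀ i, Measure (Y i)) [∀ i, IsProbabilityMeasure (μ i)] :
    iIndepFun (fun i (ω : ∀ j, Y j) => ω i) (Measure.pi μ) := by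
  classical
  rw [iIndepFun_iff]
  intro s f' hf'
  choose t ht h_eq using hf'
  have hset : (⋂ i ∈ s, f' i)
      = Set.pi Set.univ (fun j => if h : j ∈ s then t j h else Set.univ) := by
    ext x
    simp only [Set.mem_iInter, Set.mem_pi, Set.mem_univ, true_implies]
    constructor
    · intro hx j
      by_cases h : j ∈ s
      · simp only [h, dif_pos]
        have := hx j h
        rw [← h_eq j h] at this
        exact this
      · simp [h]
    · intro hx i hi
      have := hx i
      rw [dif_pos hi] at this
      rw [← h_eq i hi]
      exact this
  rw [hset, Measure.pi_pi]
  rw [← Finset.prod_subset (Finset.subset_univ s) (by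
    intro j _ hj
    simp [hj])]
  refine Finset.prod_congr rfl fun i hi => ?_
  rw [← h_eq i hi, dif_pos hi]
  have h2 := my_pi_map_eval μ i
  rw [← h2, Measure.map_apply (measurable_pi_apply i) (ht i hi)]

end helpers



lemma my_memLp_of_bound {Ω : Type*} [MeasurableSpace Ω] {μ : Measure Ω} [IsProbabilityMeasure μ]
    {f : Ω → ℝ} (hf : Measurable f) (C : ℝ) (hC : ∀ x, |f x| ≤ C) :
    MemLp f 2 μ :=
  MemLp.of_bound hf.aestronglyMeasurable C (ae_of_all _ fun x => by
    simpa [Real.norm_eq_abs] using hC x)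

lemma my_variance_sum_pi {Y : Type*} [MeasurableSpace Y] (P : Measure Y) [IsProbabilityMeasure P]
    (n : ℕ) (f : Y → ℝ) (hf : Measurable f) (C : ℝ) (hC : ∀ x, |f x| ≤ C) :
    variance (fun ω : Fin n → Y => ∑ i, f (ω i)) (Measure.pi fun _ : Fin n => P)
      = n * variance f P := by
  set μ := Measure.pi fun _ : Fin n => P with hμ
  have hind := my_iIndepFun_eval (fun _ : Fin n => P)
  have hvar : ∀ i : Fin n, variance (fun ω : Fin n → Y => f (ω i)) μ = variance f P := by
    intro i
    rw [my_variance_comp μ (fun ω => ω i) (measurable_pi_apply i) f hf]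
    rw [show (μ.map fun ω => ω i) = P from my_pi_map_eval (fun _ : Fin n => P) i]
  have hmem : ∀ i : Fin n, MemLp (fun ω : Fin n → Y => f (ω i)) 2 μ := fun i =>
    my_memLp_of_bound ((hf.comp (measurable_pi_apply i))) C (fun x => hC _)
  have hsum := IndepFun.variance_sum (μ := μ) (X := fun i (ω : Fin n → Y) => f (ω i))
    (s := Finset.univ) (fun i _ => hmem i)
    (fun i _ j _ hij => ((hind.indepFun hij).comp hf hf))
  have : (fun ω : Fin n → Y => ∑ i, f (ω i)) = ∑ i : Fin n, fun ω : Fin n → Y => f (ω i) := by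
    funext ω; simp
  rw [this, hsum]
  simp [hvar, Finset.sum_const, nsmul_eq_mul]



lemma my_variance_expect_le {Y : Type*} [MeasurableSpace Y] (P : Measure Y)
    [IsProbabilityMeasure P] (f : Y → ℝ) (hf : Measurable f) (D : ℝ)
    (hD : ∀ x, f x ^ 2 ≤ D) (C : ℝ) (hC : ∀ x, |f x| ≤ C) :
    variance f P ≤ D := by
  have h1 : variance f P ≤ ∫ x, f x ^ 2 ∂P := by
    simpa only [Pi.pow_apply] using variance_le_expectation_sq (μ := P) hf.aestronglyMeasurable
  refine h1.trans ?_
  have hint : Integrable (fun x => f x ^ 2) P := (my_memLp_of_bound hf C hC).integrable_sq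
  calc (∫ x, f x ^ 2 ∂P) ≤ ∫ _, D ∂P := integral_mono hint (integrable_const _) (fun x => hD x)
    _ = D := by simp

set_option maxHeartbeats 1000000

/-- Finite-sample variance upper bound (Theorem 2 of the paper): for `g` the
α-relative density ratio with `0 ≤ g ≤ M`, the leading statistic of the
divergence estimator `PÊ_α`, built from `n` i.i.d. samples from `P` and `n'`
i.i.d. samples from `P'`, has variance at most
`M²/n + α²M⁴/(4n) + (1−α)²M⁴/(4n')`. -/
theorem variance_relPE_estimator_le {X : Type*} [MeasurableSpace X]
    (P P' : Measure X) [IsProbabilityMeasure P] [IsProbabilityMeasure P']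
    (n n' : ℕ) (hn : 1 ≤ n) (hn' : 1 ≤ n')
    (α : ℝ) (hα0 : 0 ≤ α) (hα1 : α ≤ 1)
    (M : ℝ) (hM : 0 ≤ M)
    (g : X → ℝ) (hg : Measurable g) (hgb : ∀ x, 0 ≤ g x ∧ g x ≤ M) :
    variance
        (fun ω : (Fin n → X) × (Fin n' → X) =>
          (1 / (n : ℝ)) * ∑ i : Fin n, (g (ω.1 i) - (α / 2) * g (ω.1 i) ^ 2)
            - ((1 - α) / (2 * (n' : ℝ))) * ∑ j : Fin n', g (ω.2 j) ^ 2)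
        ((Measure.pi fun _ : Fin n => P).prod (Measure.pi fun _ : Fin n' => P'))
      ≤ M ^ 2 / n + α ^ 2 * M ^ 4 / (4 * n) + (1 - α) ^ 2 * M ^ 4 / (4 * n') := by
  have hn0 : (0 : ℝ) < n := by exact_mod_cast hn
  have hn'0 : (0 : ℝ) < n' := by exact_mod_cast hn'
  set f₁ : X → ℝ := fun x => g x - (α / 2) * g x ^ 2 with hf₁def
  set f₂ : X → ℝ := fun x => g x ^ 2 with hf₂def
  have hf₁ : Measurable f₁ := hg.sub (measurable_const.mul (hg.pow_const 2))
  have hf₂ : Measurable f₂ := hg.pow_const 2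
  have hC₁0 : (0:ℝ) ≤ M + M ^ 2 / 2 := by positivity
  have hC₂0 : (0:ℝ) ≤ M ^ 2 := by positivity
  have hC₁ : ∀ x, |f₁ x| ≤ M + M ^ 2 / 2 := by
    intro x
    obtain ⟨h0, h1⟩ := hgb x
    have hsq : g x ^ 2 ≤ M ^ 2 := pow_le_pow_left₀ h0 h1 2
    have ha : α * g x ^ 2 ≤ α * M ^ 2 := mul_le_mul_of_nonneg_left hsq hα0
    have hb : α * M ^ 2 ≤ 1 * M ^ 2 := mul_le_mul_of_nonneg_right hα1 (by positivity)
    have h3 : 0 ≤ α * g x ^ 2 := mul_nonneg hα0 (sq_nonneg (g x))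
    simp only [hf₁def]
    rw [abs_le]
    constructor <;> [linarith; linarith]
  have hC₂ : ∀ x, |f₂ x| ≤ M ^ 2 := by
    intro x
    obtain ⟨h0, h1⟩ := hgb x
    have hsq : g x ^ 2 ≤ M ^ 2 := pow_le_pow_left₀ h0 h1 2
    simp only [hf₂def]
    rw [abs_le]
    constructor <;> [nlinarith [sq_nonneg (g x)]; linarith]
  set μ₁ : Measure (Fin n → X) := Measure.pi fun _ => P with hμ₁
  set μ₂ : Measure (Fin n' → X) := Measure.pi fun _ => P' with hμ₂
  set μ : Measure ((Fin n → X) × (Fin n' → X)) := μ₁.prod μ₂ with hμdef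
  set A : (Fin n → X) → ℝ := fun y => (1 / (n : ℝ)) * ∑ i, f₁ (y i) with hA
  set B : (Fin n' → X) → ℝ := fun y => (-((1 - α) / (2 * (n' : ℝ)))) * ∑ j, f₂ (y j) with hB
  have hAm : Measurable A :=
    (Finset.measurable_sum Finset.univ fun i _ => hf₁.comp (measurable_pi_apply i)).const_mul _
  have hBm : Measurable B :=
    (Finset.measurable_sum Finset.univ fun j _ => hf₂.comp (measurable_pi_apply j)).const_mul _
  -- bounds on A and B
  have hAb : ∀ y, |A y| ≤ (M + M ^ 2 / 2) := by
    intro y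
    have h1 : |∑ i, f₁ (y i)| ≤ ∑ i : Fin n, (M + M ^ 2 / 2) :=
      (Finset.abs_sum_le_sum_abs _ _).trans (Finset.sum_le_sum fun i _ => hC₁ (y i))
    calc |A y| = (1 / (n : ℝ)) * |∑ i, f₁ (y i)| := by
            rw [abs_mul, abs_of_nonneg (by positivity : (0:ℝ) ≤ 1 / (n:ℝ))]
      _ ≤ (1 / (n : ℝ)) * (n * (M + M ^ 2 / 2)) := by
            refine mul_le_mul_of_nonneg_left (h1.trans (le_of_eq ?_)) (by positivity)
            simp only [Finset.sum_const, Finset.card_univ, Fintype.card_fin, nsmul_eq_mul]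
      _ = (M + M ^ 2 / 2) := by field_simp
  have hBb : ∀ y, |B y| ≤ (M ^ 2) := by
    intro y
    have h1 : |∑ j, f₂ (y j)| ≤ ∑ j : Fin n', (M ^ 2) :=
      (Finset.abs_sum_le_sum_abs _ _).trans (Finset.sum_le_sum fun j _ => hC₂ (y j))
    have hc : |(-((1 - α) / (2 * (n' : ℝ))))| ≤ 1 / (n' : ℝ) := by
      rw [abs_neg, abs_div, abs_of_nonneg (by linarith : (0:ℝ) ≤ 1 - α),
        abs_of_nonneg (by positivity : (0:ℝ) ≤ 2 * (n' : ℝ))]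
      rw [div_le_div_iff₀ (by positivity) hn'0]
      nlinarith
    calc |B y| = |(-((1 - α) / (2 * (n' : ℝ))))| * |∑ j, f₂ (y j)| := abs_mul _ _
      _ ≤ (1 / (n' : ℝ)) * ((n' : ℝ) * (M ^ 2)) := by
          refine mul_le_mul hc (h1.trans (le_of_eq (by
            simp only [Finset.sum_const, Finset.card_univ, Fintype.card_fin, nsmul_eq_mul])))
            (abs_nonneg _) (by positivity)
      _ = (M ^ 2) := by field_simp
  -- independence of the two halves
  have hfst : μ.map Prod.fst = μ₁ := by
    rw [hμdef, Measure.map_fst_prod, measure_univ, one_smul]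
  have hsnd : μ.map Prod.snd = μ₂ := by
    rw [hμdef, Measure.map_snd_prod, measure_univ, one_smul]
  have hIndep0 : IndepFun (Prod.fst : _ → Fin n → X) (Prod.snd : _ → Fin n' → X) μ := by
    rw [indepFun_iff_map_prod_eq_prod_map_map measurable_fst.aemeasurable
      measurable_snd.aemeasurable]
    rw [hfst, hsnd]
    have : (fun ω : (Fin n → X) × (Fin n' → X) => (ω.1, ω.2)) = id := by
      funext ω; rfl
    rw [this, Measure.map_id]
  have hIndep : IndepFun (fun ω : (Fin n → X) × (Fin n' → X) => A ω.1)
      (fun ω => B ω.2) μ := hIndep0.comp hAm hBm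
  have hmemA : MemLp (fun ω : (Fin n → X) × (Fin n' → X) => A ω.1) 2 μ :=
    my_memLp_of_bound (hAm.comp measurable_fst) (M + M ^ 2 / 2) fun ω => hAb ω.1
  have hmemB : MemLp (fun ω : (Fin n → X) × (Fin n' → X) => B ω.2) 2 μ :=
    my_memLp_of_bound (hBm.comp measurable_snd) (M ^ 2) fun ω => hBb ω.2
  -- rewrite the statistic
  have hTeq : (fun ω : (Fin n → X) × (Fin n' → X) =>
      (1 / (n : ℝ)) * ∑ i : Fin n, (g (ω.1 i) - (α / 2) * g (ω.1 i) ^ 2)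
        - ((1 - α) / (2 * (n' : ℝ))) * ∑ j : Fin n', g (ω.2 j) ^ 2)
      = (fun ω => A ω.1) + (fun ω => B ω.2) := by
    funext ω
    simp only [hA, hB, hf₁def, hf₂def, Pi.add_apply]
    ring
  rw [hTeq, hIndep.variance_add hmemA hmemB]
  -- compute each variance
  have hVA : variance (fun ω : (Fin n → X) × (Fin n' → X) => A ω.1) μ
      = (1 / (n : ℝ)) ^ 2 * ((n : ℝ) * variance f₁ P) := by
    rw [my_variance_comp μ Prod.fst measurable_fst A hAm, hfst, hA]
    rw [variance_const_mul (1 / (n : ℝ)) (fun y : Fin n → X => ∑ i, f₁ (y i)) μ₁]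
    rw [hμ₁, my_variance_sum_pi P n f₁ hf₁ (M + M ^ 2 / 2) hC₁]
  have hVB : variance (fun ω : (Fin n → X) × (Fin n' → X) => B ω.2) μ
      = ((1 - α) / (2 * (n' : ℝ))) ^ 2 * ((n' : ℝ) * variance f₂ P') := by
    rw [my_variance_comp μ Prod.snd measurable_snd B hBm, hsnd, hB]
    rw [variance_const_mul (-((1 - α) / (2 * (n' : ℝ)))) (fun y : Fin n' → X => ∑ j, f₂ (y j)) μ₂]
    rw [hμ₂, my_variance_sum_pi P' n' f₂ hf₂ (M ^ 2) hC₂]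
    ring
  rw [hVA, hVB]
  -- variance bounds
  have hV₁ : variance f₁ P ≤ M ^ 2 + α ^ 2 * M ^ 4 / 4 := by
    refine my_variance_expect_le P f₁ hf₁ _ (fun x => ?_) (M + M ^ 2 / 2) hC₁
    obtain ⟨h0, h1⟩ := hgb x
    simp only [hf₁def]
    have h2 : g x ^ 2 ≤ M ^ 2 := pow_le_pow_left₀ h0 h1 2
    have h4 : g x ^ 4 ≤ M ^ 4 := pow_le_pow_left₀ h0 h1 4
    have h3 : 0 ≤ α * g x ^ 3 := mul_nonneg hα0 (pow_nonneg h0 3)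
    have h5 : α ^ 2 / 4 * g x ^ 4 ≤ α ^ 2 / 4 * M ^ 4 :=
      mul_le_mul_of_nonneg_left h4 (by positivity)
    nlinarith
  have hV₂ : variance f₂ P' ≤ M ^ 4 := by
    refine my_variance_expect_le P' f₂ hf₂ _ (fun x => ?_) (M ^ 2) hC₂
    obtain ⟨h0, h1⟩ := hgb x
    have h4 : g x ^ 4 ≤ M ^ 4 := pow_le_pow_left₀ h0 h1 4
    simp only [hf₂def]
    nlinarith
  have hVar1 : 0 ≤ variance f₂ P' := variance_nonneg _ _
  have e1 : (1 / (n : ℝ)) ^ 2 * ((n : ℝ) * variance f₁ P) = variance f₁ P / n := by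
    field_simp
  have e2 : ((1 - α) / (2 * (n' : ℝ))) ^ 2 * ((n' : ℝ) * variance f₂ P')
      = (1 - α) ^ 2 * variance f₂ P' / (4 * n') := by
    field_simp; ring
  rw [e1, e2]
  have b1 : variance f₁ P / n ≤ (M ^ 2 + α ^ 2 * M ^ 4 / 4) / n := by gcongr
  have b2 : (1 - α) ^ 2 * variance f₂ P' / (4 * n') ≤ (1 - α) ^ 2 * M ^ 4 / (4 * n') := by
    gcongr
  have e3 : (M ^ 2 + α ^ 2 * M ^ 4 / 4) / n = M ^ 2 / n + α ^ 2 * M ^ 4 / (4 * n) := by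
    field_simp
  linarith [b1, b2, e3 ▸ b1]
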